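/- Let X be countably infinite. Every ideal clone on X is contained in a precomplete clone. Moreover, every precomplete clone containing an ideal clone is itself an ideal clone: if C is a precomplete clone and C_I ⊆ C for some ideal I in our sense, then C = C_J for some ideal J in our sense. -/

import Mathlib

/-- The set of all finitary operations on `X`: an element of arity index `n`
is an `(n+1)`-ary operation, so that all arities are `≥ 1`. -/
abbrev Ops (X : Type) : Type := Σ n : ℕ, (Fin (n + 1) → X) → X

/-- `opImage f A` is the image `f[A^n]` of the `n`-th power of `A` under the
`n`-ary operation `f`. -/
def opImage {X : Type} (f : Ops X) (A : Set X) : Set X :=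
  f.2 '' {x | ∀ i, x i ∈ A}

/-- An ideal "in our sense": closed under subsets and finite unions, contains all
finite sets, contains at least one infinite set, and does not contain `X`. -/
def IsIdealInOurSense {X : Type} (I : Set (Set X)) : Prop :=
  (∀ A ∈ I, ∀ B ⊆ A, B ∈ I) ∧
  (∀ A ∈ I, ∀ B ∈ I, A ∪ B ∈ I) ∧
  (∀ A : Set X, A.Finite → A ∈ I) ∧
  (∃ A ∈ I, A.Infinite) ∧
  (Set.univ : Set X) ∉ I

/-- The clone `C_I` induced by a collection of sets `I`: all operations mapping
powers of `I`-sets into `I`. -/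
def idealClone {X : Type} (I : Set (Set X)) : Set (Ops X) :=
  {f | ∀ A ∈ I, opImage f A ∈ I}

/-- The unary part `C_I^{(1)}` of the clone induced by `I`. -/
def unaryPart {X : Type} (I : Set (Set X)) : Set (X → X) :=
  {f | ∀ A ∈ I, f '' A ∈ I}

/-- A clone: a set of finitary operations containing all projections and closed
under composition. -/
def IsClone {X : Type} (C : Set (Ops X)) : Prop :=
  (∀ (n : ℕ) (i : Fin (n + 1)), (⟨n, fun x => x i⟩ : Ops X) ∈ C) ∧
  ∀ (n m : ℕ) (f : (Fin (n + 1) → X) → X) (g : Fin (n + 1) → (Fin (m + 1) → X) → X),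
    (⟨n, f⟩ : Ops X) ∈ C → (∀ i, (⟨m, g i⟩ : Ops X) ∈ C) →
    (⟨m, fun x => f fun i => g i x⟩ : Ops X) ∈ C

/-- The clone generated by a set of operations. -/
def cloneGen {X : Type} (F : Set (Ops X)) : Set (Ops X) :=
  ⋂₀ {C : Set (Ops X) | IsClone C ∧ F ⊆ C}

/-- A precomplete clone: a proper clone whose only proper cover is the full clone `O`. -/
def IsPrecompleteClone {X : Type} (C : Set (Ops X)) : Prop :=
  IsClone C ∧ C ≠ Set.univ ∧
  ∀ D : Set (Ops X), IsClone D → C ⊂ D → D = Set.univ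

/-- The regularization `Î` of `I`: all sets `A` such that every infinite subset
of `A` contains an infinite member of `I`. -/
def regularization {X : Type} (I : Set (Set X)) : Set (Set X) :=
  {A | ∀ B ⊆ A, B.Infinite → ∃ C ⊆ B, C.Infinite ∧ C ∈ I}

section Aux

variable {X : Type}

/-- Any operation all of whose values lie in a member `A` of the ideal belongs to the
ideal clone. -/
lemma mem_idealClone_of_forall {I : Set (Set X)} (hI : IsIdealInOurSense I)
    {A : Set X} (hA : A ∈ I) {n : ℕ} {f : (Fin (n + 1) → X) → X}
    (hf : ∀ x, f x ∈ A) : (⟨n, f⟩ : Ops X) ∈ idealClone I := by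
  intro S _
  refine hI.1 A hA _ ?_
  rintro _ ⟨x, _, rfl⟩
  exact hf x

/-- Composing a member of a clone with projections stays in the clone. -/
lemma comp_proj_mem {C : Set (Ops X)} (hC : IsClone C) {n : ℕ}
    {f : (Fin (n + 1) → X) → X} (hf : (⟨n, f⟩ : Ops X) ∈ C) {N : ℕ}
    (e : Fin (n + 1) → Fin (N + 1)) :
    (⟨N, fun x => f (fun i => x (e i))⟩ : Ops X) ∈ C :=
  hC.2 n N f (fun i x => x (e i)) hf (fun i => hC.1 N (e i))

/-- The crucial lemma: if a clone contains the ideal clone of `I` together with an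
operation mapping a power of a member of `I` onto everything, then it is the full clone. -/
lemma crux {I : Set (Set X)} {C : Set (Ops X)} (hI : IsIdealInOurSense I)
    (hC : IsClone C) (hIC : idealClone I ⊆ C) {n : ℕ} {f : (Fin (n + 1) → X) → X}
    (hf : (⟨n, f⟩ : Ops X) ∈ C) {A : Set X} (hA : A ∈ I)
    (hcov : Set.univ ⊆ opImage ⟨n, f⟩ A) : C = Set.univ := by
  apply Set.eq_univ_of_forall
  rintro ⟨m, h⟩
  have hex : ∀ x : X, ∃ y : Fin (n + 1) → X, (∀ i, y i ∈ A) ∧ f y = x :=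
    fun x => hcov (Set.mem_univ x)
  choose t ht1 ht2 using hex
  have hgmem : ∀ i, (⟨m, fun x : Fin (m + 1) → X => t (h x) i⟩ : Ops X) ∈ C :=
    fun i => hIC (mem_idealClone_of_forall hI hA (fun x => ht1 (h x) i))
  have hcomp := hC.2 n m f (fun i x => t (h x) i) hf hgmem
  have heq : (fun x => f fun i => t (h x) i) = h := by
    funext x
    exact ht2 (h x)
  rwa [heq] at hcomp

/-- The ideal induced by a clone `C` over a base ideal `I`: sets covered by an image of
a power of a member of `I` under a member of `C`. -/
def idealOf (C : Set (Ops X)) (I : Set (Set X)) : Set (Set X) :=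
  {S | ∃ f ∈ C, ∃ A ∈ I, S ⊆ opImage f A}

lemma subset_idealOf {C : Set (Ops X)} {I : Set (Set X)} (hC : IsClone C) :
    I ⊆ idealOf C I := by
  intro A hA
  refine ⟨⟨0, fun x => x 0⟩, hC.1 0 0, A, hA, ?_⟩
  intro a ha
  exact ⟨fun _ => a, fun _ => ha, rfl⟩

lemma idealOf_union {C : Set (Ops X)} {I : Set (Set X)} [Infinite X]
    (hI : IsIdealInOurSense I) (hC : IsClone C) (hIC : idealClone I ⊆ C) :
    ∀ S ∈ idealOf C I, ∀ T ∈ idealOf C I, S ∪ T ∈ idealOf C I := by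
  classical
  rintro S ⟨⟨n, f⟩, hf, A, hA, hSA⟩ T ⟨⟨m, g⟩, hg, B, hB, hTB⟩
  obtain ⟨a, b, hab⟩ := exists_pair_ne X
  set N := n + m + 2 with hN
  have hz : (0 : ℕ) < N + 1 := by omega
  set z : Fin (N + 1) := ⟨0, hz⟩ with hzdef
  have he1 : ∀ i : Fin (n + 1), i.val + 1 < N + 1 := fun i => by have := i.isLt; omega
  have he2 : ∀ j : Fin (m + 1), j.val + n + 2 < N + 1 := fun j => by have := j.isLt; omega
  set e₁ : Fin (n + 1) → Fin (N + 1) := fun i => ⟨i.val + 1, he1 i⟩ with he1def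
  set e₂ : Fin (m + 1) → Fin (N + 1) := fun j => ⟨j.val + n + 2, he2 j⟩ with he2def
  -- the selector gadget
  set d : (Fin 3 → X) → X := fun v => if v 0 = a then v 1 else v 2 with hddef
  have hd : (⟨2, d⟩ : Ops X) ∈ C := by
    apply hIC
    intro S' hS'
    refine hI.1 S' hS' _ ?_
    rintro _ ⟨v, hv, rfl⟩
    by_cases hva : v 0 = a
    · show (if v 0 = a then v 1 else v 2) ∈ S'
      rw [if_pos hva]; exact hv 1
    · show (if v 0 = a then v 1 else v 2) ∈ S'
      rw [if_neg hva]; exact hv 2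
  set F' : (Fin (N + 1) → X) → X := fun x => f (fun i => x (e₁ i)) with hF'def
  set G' : (Fin (N + 1) → X) → X := fun x => g (fun j => x (e₂ j)) with hG'def
  have hF' : (⟨N, F'⟩ : Ops X) ∈ C := comp_proj_mem hC hf e₁
  have hG' : (⟨N, G'⟩ : Ops X) ∈ C := comp_proj_mem hC hg e₂
  set G3 : Fin 3 → (Fin (N + 1) → X) → X :=
    fun i => if i.val = 0 then (fun x => x z) else if i.val = 1 then F' else G' with hG3def
  have hG3mem : ∀ i, (⟨N, G3 i⟩ : Ops X) ∈ C := by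
    intro i
    rcases (by omega : i.val = 0 ∨ i.val = 1 ∨ i.val = 2) with h | h | h
    · have : G3 i = fun x => x z := by rw [hG3def]; dsimp only; rw [if_pos h]
      rw [this]; exact hC.1 N z
    · have : G3 i = F' := by rw [hG3def]; dsimp only; rw [if_neg (show i.val ≠ 0 by omega), if_pos h]
      rw [this]; exact hF'
    · have : G3 i = G' := by rw [hG3def]; dsimp only; rw [if_neg (show i.val ≠ 0 by omega), if_neg (show i.val ≠ 1 by omega)]
      rw [this]; exact hG'
  have hdeval : ∀ x : Fin (N + 1) → X,
      d (fun i => G3 i x) = if x z = a then F' x else G' x := fun _ => rfl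
  have hH : (⟨N, fun x => d (fun i => G3 i x)⟩ : Ops X) ∈ C := hC.2 2 N d G3 hd hG3mem
  refine ⟨⟨N, fun x => d (fun i => G3 i x)⟩, hH, A ∪ B ∪ {a, b},
    hI.2.1 _ (hI.2.1 _ hA _ hB) _ (hI.2.2.1 _ ((Set.finite_singleton b).insert a)), ?_⟩
  rintro s (hs | hs)
  · -- s ∈ S ⊆ f[Aⁿ]
    have hs' : ∃ y : Fin (n + 1) → X, (∀ i, y i ∈ A) ∧ f y = s := hSA hs
    obtain ⟨y, hy, rfl⟩ := hs'
    set x0 : Fin (N + 1) → X := fun k =>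
      if 1 ≤ k.val ∧ k.val < n + 2 then y ⟨min (k.val - 1) n, by omega⟩ else a with hx0
    have hx0mem : ∀ k, x0 k ∈ A ∪ B ∪ {a, b} := by
      intro k
      simp only [hx0]
      by_cases hk : 1 ≤ k.val ∧ k.val < n + 2
      · rw [if_pos hk]; exact Or.inl (Or.inl (hy _))
      · rw [if_neg hk]; exact Or.inr (Or.inl rfl)
    have hx0z : x0 z = a := by
      simp only [hx0]
      have : ¬ (1 ≤ z.val ∧ z.val < n + 2) := by
        show ¬ (1 ≤ (0 : ℕ) ∧ (0 : ℕ) < n + 2)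
        omega
      rw [if_neg this]
    have he₁x : ∀ i, x0 (e₁ i) = y i := by
      intro i
      simp only [hx0]
      have hvi : (e₁ i).val = i.val + 1 := rfl
      have hcond : 1 ≤ (e₁ i).val ∧ (e₁ i).val < n + 2 := by
        rw [hvi]; have := i.isLt; omega
      rw [if_pos hcond]
      congr 1
      refine Fin.ext ?_
      show min ((e₁ i).val - 1) n = i.val
      rw [hvi]; have := i.isLt; omega
    refine ⟨x0, hx0mem, ?_⟩
    show d (fun i => G3 i x0) = f y
    rw [hdeval x0, hx0z, if_pos rfl, hF'def]
    show f (fun i => x0 (e₁ i)) = f y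
    congr 1
    funext i
    exact he₁x i
  · -- s ∈ T ⊆ g[Bᵐ]
    have hs' : ∃ y : Fin (m + 1) → X, (∀ j, y j ∈ B) ∧ g y = s := hTB hs
    obtain ⟨y, hy, rfl⟩ := hs'
    set x0 : Fin (N + 1) → X := fun k =>
      if n + 2 ≤ k.val then y ⟨min (k.val - (n + 2)) m, by omega⟩ else b with hx0
    have hx0mem : ∀ k, x0 k ∈ A ∪ B ∪ {a, b} := by
      intro k
      simp only [hx0]
      by_cases hk : n + 2 ≤ k.val
      · rw [if_pos hk]; exact Or.inl (Or.inr (hy _))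
      · rw [if_neg hk]; exact Or.inr (Or.inr rfl)
    have hx0z : x0 z = b := by
      simp only [hx0]
      have : ¬ (n + 2 ≤ z.val) := by
        show ¬ (n + 2 ≤ (0 : ℕ))
        omega
      rw [if_neg this]
    have he₂x : ∀ j, x0 (e₂ j) = y j := by
      intro j
      simp only [hx0]
      have hvj : (e₂ j).val = j.val + n + 2 := rfl
      have hcond : n + 2 ≤ (e₂ j).val := by rw [hvj]; omega
      rw [if_pos hcond]
      congr 1
      refine Fin.ext ?_
      show min ((e₂ j).val - (n + 2)) m = j.val
      rw [hvj]; have := j.isLt; omega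
    refine ⟨x0, hx0mem, ?_⟩
    show d (fun i => G3 i x0) = g y
    have : x0 z ≠ a := by rw [hx0z]; exact fun h => hab h.symm
    rw [hdeval x0, if_neg this, hG'def]
    show g (fun j => x0 (e₂ j)) = g y
    congr 1
    funext j
    exact he₂x j

lemma isIdeal_idealOf {C : Set (Ops X)} {I : Set (Set X)} [Infinite X]
    (hI : IsIdealInOurSense I) (hC : IsClone C) (hIC : idealClone I ⊆ C)
    (hCproper : C ≠ Set.univ) : IsIdealInOurSense (idealOf C I) := by
  refine ⟨?_, idealOf_union hI hC hIC, ?_, ?_, ?_⟩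
  · rintro A ⟨f, hf, A', hA', hsub⟩ B hB
    exact ⟨f, hf, A', hA', hB.trans hsub⟩
  · intro A hA
    exact subset_idealOf hC (hI.2.2.1 A hA)
  · obtain ⟨A, hA, hAinf⟩ := hI.2.2.2.1
    exact ⟨A, subset_idealOf hC hA, hAinf⟩
  · rintro ⟨⟨n, f⟩, hf, A, hA, hcov⟩
    exact hCproper (crux hI hC hIC hf hA hcov)

lemma subset_idealClone_idealOf {C : Set (Ops X)} {I : Set (Set X)} (hC : IsClone C) :
    C ⊆ idealClone (idealOf C I) := by
  rintro ⟨n, f⟩ hf S ⟨⟨m, g⟩, hg, A, hA, hSA⟩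
  have hpos : 0 < m + 1 := Nat.succ_pos m
  set N₂ := n * m + n + m with hN₂
  have hdivlt : ∀ k : Fin (N₂ + 1), k.val / (m + 1) < n + 1 := by
    intro k
    apply (Nat.div_lt_iff_lt_mul hpos).mpr
    have hEq : (n + 1) * (m + 1) = N₂ + 1 := by rw [hN₂]; ring
    rw [hEq]
    exact k.isLt
  have hmodlt : ∀ k : Fin (N₂ + 1), k.val % (m + 1) < m + 1 := fun k => Nat.mod_lt _ hpos
  have he : ∀ (i : Fin (n + 1)) (j : Fin (m + 1)), j.val + i.val * (m + 1) < N₂ + 1 := by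
    intro i j
    have hEq : N₂ + 1 = (n + 1) * (m + 1) := by rw [hN₂]; ring
    rw [hEq]
    calc j.val + i.val * (m + 1) < (m + 1) + i.val * (m + 1) := by omega
      _ = (i.val + 1) * (m + 1) := by ring
      _ ≤ (n + 1) * (m + 1) := Nat.mul_le_mul_right _ i.isLt
  set e : Fin (n + 1) → Fin (m + 1) → Fin (N₂ + 1) :=
    fun i j => ⟨j.val + i.val * (m + 1), he i j⟩ with hedef
  -- inner compositions
  have hGimem : ∀ i : Fin (n + 1),
      (⟨N₂, fun x => g (fun j => x (e i j))⟩ : Ops X) ∈ C :=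
    fun i => comp_proj_mem hC hg (e i)
  have hH : (⟨N₂, fun x => f (fun i => g (fun j => x (e i j)))⟩ : Ops X) ∈ C :=
    hC.2 n N₂ f (fun i x => g (fun j => x (e i j))) hf hGimem
  refine ⟨⟨N₂, fun x => f (fun i => g (fun j => x (e i j)))⟩, hH, A, hA, ?_⟩
  rintro _ ⟨y, hy, rfl⟩
  have hex : ∀ i, ∃ w : Fin (m + 1) → X, (∀ j, w j ∈ A) ∧ g w = y i :=
    fun i => hSA (hy i)
  choose w hw1 hw2 using hex
  refine ⟨fun k => w ⟨k.val / (m + 1), hdivlt k⟩ ⟨k.val % (m + 1), hmodlt k⟩,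
    fun k => hw1 _ _, ?_⟩
  show f _ = f y
  congr 1
  funext i
  have harg : ∀ j : Fin (m + 1),
      (fun k : Fin (N₂ + 1) => w ⟨k.val / (m + 1), hdivlt k⟩ ⟨k.val % (m + 1), hmodlt k⟩)
        (e i j) = w i j := by
    intro j
    show w ⟨(e i j).val / (m + 1), _⟩ ⟨(e i j).val % (m + 1), _⟩ = w i j
    have hv : (e i j).val = j.val + i.val * (m + 1) := rfl
    have hdiv : (e i j).val / (m + 1) = i.val := by
      rw [hv, Nat.add_mul_div_right _ _ hpos, Nat.div_eq_of_lt j.isLt, Nat.zero_add]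
    have hmod : (e i j).val % (m + 1) = j.val := by
      rw [hv, Nat.add_mul_mod_self_right, Nat.mod_eq_of_lt j.isLt]
    congr 1
    · exact Fin.ext hdiv
    · exact Fin.ext hmod
  calc g (fun j => (fun k : Fin (N₂ + 1) =>
          w ⟨k.val / (m + 1), hdivlt k⟩ ⟨k.val % (m + 1), hmodlt k⟩) (e i j))
      = g (fun j => w i j) := by congr 1; funext j; exact harg j
    _ = y i := hw2 i

lemma iUnion_mem_of_ideal {J : Set (Set X)} (hJ : IsIdealInOurSense J) :
    ∀ (k : ℕ) (T : Fin k → Set X), (∀ i, T i ∈ J) → (⋃ i, T i) ∈ J := by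
  intro k
  induction k with
  | zero =>
    intro T _
    have : (⋃ i : Fin 0, T i) = ∅ := Set.iUnion_of_empty T
    rw [this]
    exact hJ.2.2.1 ∅ Set.finite_empty
  | succ k ih =>
    intro T hT
    have : (⋃ i : Fin (k + 1), T i) = T 0 ∪ ⋃ i : Fin k, T i.succ := by
      ext x
      simp only [Set.mem_iUnion, Set.mem_union]
      exact Fin.exists_fin_succ
    rw [this]
    exact hJ.2.1 _ (hT 0) _ (ih _ fun i => hT i.succ)

lemma isClone_idealClone {J : Set (Set X)} (hJ : IsIdealInOurSense J) :
    IsClone (idealClone J) := by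
  constructor
  · intro n i A hA
    refine hJ.1 A hA _ ?_
    rintro _ ⟨x, hx, rfl⟩
    exact hx i
  · intro n m f g hf hg A hA
    have hU : (⋃ i, opImage (⟨m, g i⟩ : Ops X) A) ∈ J :=
      iUnion_mem_of_ideal hJ _ _ (fun i => hg i A hA)
    have hfS := hf _ hU
    refine hJ.1 _ hfS _ ?_
    rintro _ ⟨x, hx, rfl⟩
    exact ⟨fun i => g i x, fun i => Set.mem_iUnion.mpr ⟨i, ⟨x, hx, rfl⟩⟩, rfl⟩

lemma idealClone_ne_univ [Countable X] [Infinite X] {J : Set (Set X)} (hJ : IsIdealInOurSense J) :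
    idealClone J ≠ Set.univ := by
  classical
  obtain ⟨A, hA, hAinf⟩ := hJ.2.2.2.1
  have : Infinite ↥A := hAinf.to_subtype
  obtain ⟨eqv⟩ : Nonempty (↥A ≃ X) := nonempty_equiv_of_countable
  intro h
  set σ : X → X := fun x => if hx : x ∈ A then eqv ⟨x, hx⟩ else x with hσdef
  have hmem : (⟨0, fun v : Fin 1 → X => σ (v 0)⟩ : Ops X) ∈ idealClone J := by
    rw [h]; exact Set.mem_univ _
  have hcov : Set.univ ⊆ opImage ⟨0, fun v : Fin 1 → X => σ (v 0)⟩ A := by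
    intro x _
    refine ⟨fun _ => (eqv.symm x).val, fun _ => (eqv.symm x).property, ?_⟩
    show σ ((eqv.symm x).val) = x
    rw [hσdef]
    simp only
    rw [dif_pos (eqv.symm x).property]
    have : (⟨(eqv.symm x).val, (eqv.symm x).property⟩ : ↥A) = eqv.symm x := rfl
    rw [this, Equiv.apply_symm_apply]
  have himg := hmem A hA
  have : opImage ⟨0, fun v : Fin 1 → X => σ (v 0)⟩ A = Set.univ :=
    Set.eq_univ_of_univ_subset hcov
  rw [this] at himg
  exact hJ.2.2.2.2 himg

end Aux

/-- Every ideal clone is contained in a precomplete clone, and every precomplete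
clone containing an ideal clone is itself an ideal clone. -/
theorem stmt7 {X : Type} [Countable X] [Infinite X] :
    (∀ I : Set (Set X), IsIdealInOurSense I →
      ∃ C : Set (Ops X), IsPrecompleteClone C ∧ idealClone I ⊆ C) ∧
    (∀ C : Set (Ops X), IsPrecompleteClone C →
      (∃ I : Set (Set X), IsIdealInOurSense I ∧ idealClone I ⊆ C) →
      ∃ J : Set (Set X), IsIdealInOurSense J ∧ C = idealClone J) := by
  constructor
  · -- Part (a)
    intro I hI
    set P : Set (Set (Set X)) :=
      {J | IsIdealInOurSense J ∧ idealClone I ⊆ idealClone J} with hPdef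
    have hchain : ∀ c ⊆ P, IsChain (· ⊆ ·) c → c.Nonempty → ∃ ub ∈ P, ∀ s ∈ c, s ⊆ ub := by
      intro c hcP hchain hne
      obtain ⟨J₀, hJ₀⟩ := hne
      refine ⟨⋃₀ c, ⟨⟨?_, ?_, ?_, ?_, ?_⟩, ?_⟩, fun s hs => Set.subset_sUnion_of_mem hs⟩
      · rintro A ⟨J, hJc, hAJ⟩ B hB
        exact ⟨J, hJc, (hcP hJc).1.1 A hAJ B hB⟩
      · rintro A ⟨J₁, hJ₁c, hAJ₁⟩ B ⟨J₂, hJ₂c, hBJ₂⟩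
        rcases hchain.total hJ₁c hJ₂c with hle | hle
        · exact ⟨J₂, hJ₂c, (hcP hJ₂c).1.2.1 A (hle hAJ₁) B hBJ₂⟩
        · exact ⟨J₁, hJ₁c, (hcP hJ₁c).1.2.1 A hAJ₁ B (hle hBJ₂)⟩
      · intro A hA
        exact ⟨J₀, hJ₀, (hcP hJ₀).1.2.2.1 A hA⟩
      · obtain ⟨A, hA, hAinf⟩ := (hcP hJ₀).1.2.2.2.1
        exact ⟨A, ⟨J₀, hJ₀, hA⟩, hAinf⟩
      · rintro ⟨J, hJc, hunivJ⟩
        exact (hcP hJc).1.2.2.2.2 hunivJ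
      · intro f hf A ⟨J, hJc, hAJ⟩
        exact ⟨J, hJc, (hcP hJc).2 hf A hAJ⟩
    obtain ⟨Jstar, _, hmax⟩ := zorn_subset_nonempty P hchain I ⟨hI, subset_rfl⟩
    have hJstar : IsIdealInOurSense Jstar := hmax.prop.1
    have hIJstar : idealClone I ⊆ idealClone Jstar := hmax.prop.2
    refine ⟨idealClone Jstar, ⟨isClone_idealClone hJstar, idealClone_ne_univ hJstar, ?_⟩,
      hIJstar⟩
    intro D hD hss
    by_contra hDne
    set J' := idealOf D Jstar with hJ'def
    have hsubD : idealClone Jstar ⊆ D := hss.le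
    have hJ' : IsIdealInOurSense J' := isIdeal_idealOf hJstar hD hsubD hDne
    have hDJ' : D ⊆ idealClone J' := subset_idealClone_idealOf hD
    have hJ'P : J' ∈ P := ⟨hJ', hIJstar.trans (hsubD.trans hDJ')⟩
    have hstarJ' : Jstar ⊆ J' := subset_idealOf hD
    have : J' = Jstar := le_antisymm (hmax.le_of_ge hJ'P hstarJ') hstarJ'
    rw [this] at hDJ'
    exact hss.not_subset hDJ'
  · -- Part (b)
    rintro C hpre ⟨I, hI, hIC⟩
    have hC := hpre.1
    have hCproper := hpre.2.1
    have hICsub : idealClone I ⊆ C := hIC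
    refine ⟨idealOf C I, isIdeal_idealOf hI hC hICsub hCproper, ?_⟩
    have hsub : C ⊆ idealClone (idealOf C I) := subset_idealClone_idealOf hC
    by_contra hne
    have hss : C ⊂ idealClone (idealOf C I) := hsub.ssubset_of_ne hne
    have := hpre.2.2 _ (isClone_idealClone (isIdeal_idealOf hI hC hICsub hCproper)) hss
    exact idealClone_ne_univ (isIdeal_idealOf hI hC hICsub hCproper) this
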